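/- For any element X of a real inner product space and any closed convex cone C, X decomposes as X = Π_C(X) - Π_{C*}(-X), where Π_C denotes the metric projection onto C and C* = {y : ⟨y, x⟩ ≥ 0 for all x ∈ C} is the dual cone. -/

import Mathlib

private lemma moreau_var_ineq {H : Type*} [NormedAddCommGroup H] [InnerProductSpace ℝ H]
    {K : Set H} (hK : Convex ℝ K) {w p : H} (hp : p ∈ K)
    (hmin : ∀ y ∈ K, ‖w - p‖ ≤ ‖w - y‖) :
    ∀ y ∈ K, (inner ℝ (w - p) (y - p) : ℝ) ≤ 0 := by
  haveI : Nonempty K := ⟨⟨p, hp⟩⟩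
  have h : ‖w - p‖ = ⨅ y : K, ‖w - y‖ :=
    le_antisymm (le_ciInf fun y => hmin y y.2)
      (ciInf_le (f := fun y : K => ‖w - y‖) ⟨0, fun a ⟨y, hy⟩ => hy ▸ norm_nonneg _⟩ ⟨p, hp⟩)
  exact (norm_eq_iInf_iff_real_inner_le_zero hK hp).1 h

/-- Moreau decomposition: `X = Π_C(X) - Π_{C*}(-X)` for a closed convex cone `C`. -/
theorem moreau_decomposition {H : Type*} [NormedAddCommGroup H] [InnerProductSpace ℝ H]
    (C : Set H) (hCne : C.Nonempty) (hCcl : IsClosed C) (hCconv : Convex ℝ C)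
    (hCcone : ∀ x ∈ C, ∀ t : ℝ, 0 ≤ t → t • x ∈ C)
    (projC projD : H → H)
    (hprojC : ∀ x, projC x ∈ C ∧ ∀ y ∈ C, ‖x - projC x‖ ≤ ‖x - y‖)
    (hprojD : ∀ x, projD x ∈ {y : H | ∀ z ∈ C, 0 ≤ (inner ℝ y z : ℝ)} ∧
        ∀ y ∈ {y : H | ∀ z ∈ C, 0 ≤ (inner ℝ y z : ℝ)}, ‖x - projD x‖ ≤ ‖x - y‖)
    (X : H) : X = projC X - projD (-X) := by
  set K : Set H := {y : H | ∀ z ∈ C, 0 ≤ (inner ℝ y z : ℝ)} with hKdef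
  set p := projC X with hpdef
  set q := projD (-X) with hqdef
  obtain ⟨hpC, hpmin⟩ := hprojC X
  obtain ⟨hqK, hqmin⟩ := hprojD (-X)
  have hKconv : Convex ℝ K := by
    intro y1 h1 y2 h2 a b ha hb hab z hz
    have := h1 z hz
    have := h2 z hz
    simp only [inner_add_left, real_inner_smul_left]
    positivity
  have h0C : (0 : H) ∈ C := by
    obtain ⟨x, hx⟩ := hCne
    simpa using hCcone x hx 0 le_rfl
  have hvarC : ∀ y ∈ C, (inner ℝ (X - p) (y - p) : ℝ) ≤ 0 :=
    moreau_var_ineq hCconv hpC hpmin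
  have h2p : (2 : ℝ) • p ∈ C := hCcone p hpC 2 (by norm_num)
  have hXp : (inner ℝ X p : ℝ) = (inner ℝ p p : ℝ) := by
    have h1 := hvarC 0 h0C
    have h2 := hvarC ((2 : ℝ) • p) h2p
    simp only [inner_sub_left, inner_sub_right, inner_zero_right,
      real_inner_smul_right] at h1 h2
    linarith
  have hXz : ∀ z ∈ C, (inner ℝ (X - p) z : ℝ) ≤ 0 := by
    intro z hz
    have hpz : p + z ∈ C := by
      have h := hCconv hpC hz (by norm_num : (0:ℝ) ≤ 1/2) (by norm_num : (0:ℝ) ≤ 1/2)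
        (by norm_num)
      have h2 := hCcone _ h 2 (by norm_num)
      rwa [smul_add, smul_smul, smul_smul, show (2:ℝ) * (1/2) = 1 by norm_num, one_smul,
        one_smul] at h2
    have := hvarC (p + z) hpz
    rwa [show p + z - p = z by abel] at this
  have hq'K : p - X ∈ K := by
    intro z hz
    have h := hXz z hz
    simp only [inner_sub_left] at h ⊢
    linarith
  have hvarK : ∀ y ∈ K, (inner ℝ (-X - q) (y - q) : ℝ) ≤ 0 :=
    moreau_var_ineq hKconv hqK hqmin
  have hvarK' : ∀ y ∈ K, (inner ℝ (-X - (p - X)) (y - (p - X)) : ℝ) ≤ 0 := by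
    intro y hy
    have hyp : (0:ℝ) ≤ inner ℝ y p := hy p hpC
    simp only [inner_sub_left, inner_sub_right, inner_neg_left, inner_neg_right]
    have c1 := real_inner_comm p y
    have c2 := real_inner_comm X p
    linarith
  have h1 := hvarK (p - X) hq'K
  have h2 := hvarK' q hqK
  have key : (inner ℝ ((p - X) - q) ((p - X) - q) : ℝ) ≤ 0 := by
    simp only [inner_sub_left, inner_sub_right, inner_neg_left, inner_neg_right] at h1 h2 ⊢
    have c1 := real_inner_comm X q
    have c2 := real_inner_comm X p
    have c3 := real_inner_comm p q
    linarith
  have hz : (p - X) - q = 0 := by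
    have hnn := real_inner_self_nonneg (x := (p - X) - q)
    exact inner_self_eq_zero.mp (le_antisymm key hnn)
  have hq' : q = p - X := (sub_eq_zero.mp hz).symm
  show X = p - q
  rw [hq']
  abel
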